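/- Let N ≥ 1, a ∈ ℝ^N, c ∈ ℂ, and let z ∈ ℂ^N have pairwise distinct entries such that moreover z_i + c ≠ z_j for all i ≠ j. Then Σ_{i=1}^N [∏_{j≠i} (c + z_i − z_j)/(z_i − z_j)] · B_a(z_1, …, z_{i−1}, z_i + c, z_{i+1}, …, z_N) = (Σ_{i=1}^N e^{c a_i}) · B_a(z_1, …, z_N). In other words, the multivariate Bessel function B_a is an eigenfunction of the operator D_c with eigenvalue Σ_i e^{c a_i}. -/

import Mathlib

open Finset


lemma det_updateRow_eq {N : ℕ} (A : Matrix (Fin N) (Fin N) ℂ) (i : Fin N) (b : Fin N → ℂ) :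
    (A.updateRow i b).det = ∑ j, A.adjugate j i * b j := by
  rw [← Matrix.cramer_transpose_apply, Matrix.cramer_eq_adjugate_mulVec,
    ← Matrix.adjugate_transpose]
  simp [Matrix.mulVec, dotProduct, Matrix.transpose_apply]

lemma sum_det_updateRow {N : ℕ} (A : Matrix (Fin N) (Fin N) ℂ) (d : Fin N → ℂ) :
    ∑ i, (A.updateRow i fun j => A i j * d j).det = (∑ j, d j) * A.det := by
  simp only [det_updateRow_eq]
  rw [Finset.sum_comm]
  have h := Matrix.adjugate_mul A
  rw [Finset.sum_mul]
  refine Finset.sum_congr rfl fun j _ => ?_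
  have hjj : (A.adjugate * A) j j = A.det := by rw [h]; simp
  rw [Matrix.mul_apply] at hjj
  calc ∑ i, A.adjugate j i * (A i j * d j) = (∑ i, A.adjugate j i * A i j) * d j := by
        rw [Finset.sum_mul]; exact Finset.sum_congr rfl fun _ _ => by ring
    _ = d j * A.det := by rw [hjj]; ring

lemma erase_split {N : ℕ} (i : Fin N) (f : Fin N → ℂ) :
    ∏ j ∈ univ.erase i, f j = (∏ j ∈ Iio i, f j) * ∏ j ∈ Ioi i, f j := by
  rw [← Finset.prod_union (Finset.disjoint_left.mpr fun a ha hb =>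
    absurd ((Finset.mem_Iio.mp ha).trans (Finset.mem_Ioi.mp hb)) (lt_irrefl a))]
  apply Finset.prod_congr _ fun _ _ => rfl
  ext j
  simp only [Finset.mem_union, Finset.mem_Iio, Finset.mem_Ioi, Finset.mem_erase,
    Finset.mem_univ, and_true]
  exact ⟨fun h => h.lt_or_gt, fun h => by rcases h with h|h; exacts [h.ne, h.ne']⟩

lemma T_split {N : ℕ} (z : Fin N → ℂ) (i : Fin N) (t : ℂ) :
    ∏ p, ∏ q ∈ Ioi p, (Function.update z i t p - Function.update z i t q)
      = ((∏ q ∈ Ioi i, (t - z q)) * ∏ p ∈ Iio i, (z p - t)) *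
        ∏ p ∈ univ.erase i, ∏ q ∈ (Ioi p).erase i, (z p - z q) := by
  rw [← Finset.mul_prod_erase univ _ (Finset.mem_univ i)]
  have h1 : ∏ q ∈ Ioi i, (Function.update z i t i - Function.update z i t q)
      = ∏ q ∈ Ioi i, (t - z q) := by
    refine Finset.prod_congr rfl fun q hq => ?_
    rw [Function.update_self, Function.update_of_ne (ne_of_gt (Finset.mem_Ioi.mp hq))]
  have h2 : ∏ p ∈ univ.erase i, ∏ q ∈ Ioi p, (Function.update z i t p - Function.update z i t q)
      = (∏ p ∈ Iio i, (z p - t)) * ∏ p ∈ univ.erase i, ∏ q ∈ (Ioi p).erase i, (z p - z q) := by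
    rw [erase_split, erase_split i (fun p => ∏ q ∈ (Ioi p).erase i, (z p - z q))]
    have hio : ∏ p ∈ Iio i, ∏ q ∈ Ioi p, (Function.update z i t p - Function.update z i t q)
        = ∏ p ∈ Iio i, ((z p - t) * ∏ q ∈ (Ioi p).erase i, (z p - z q)) := by
      refine Finset.prod_congr rfl fun p hp => ?_
      have hpi : p ≠ i := ne_of_lt (Finset.mem_Iio.mp hp)
      have hi : i ∈ Ioi p := Finset.mem_Ioi.mpr (Finset.mem_Iio.mp hp)
      rw [← Finset.mul_prod_erase _ _ hi, Function.update_of_ne hpi, Function.update_self]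
      congr 1
      refine Finset.prod_congr rfl fun q hq => ?_
      rw [Function.update_of_ne (Finset.ne_of_mem_erase hq)]
    have hoi : ∏ p ∈ Ioi i, ∏ q ∈ Ioi p, (Function.update z i t p - Function.update z i t q)
        = ∏ p ∈ Ioi i, ∏ q ∈ (Ioi p).erase i, (z p - z q) := by
      refine Finset.prod_congr rfl fun p hp => ?_
      have hpi : p ≠ i := ne_of_gt (Finset.mem_Ioi.mp hp)
      have hi : i ∉ Ioi p := by
        simp only [Finset.mem_Ioi, not_lt]
        exact le_of_lt (Finset.mem_Ioi.mp hp)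
      rw [Finset.erase_eq_of_notMem hi]
      refine Finset.prod_congr rfl fun q hq => ?_
      have hqi : q ≠ i := by
        intro h; subst h; exact hi hq
      rw [Function.update_of_ne hpi, Function.update_of_ne hqi]
    rw [hio, hoi, Finset.prod_mul_distrib]
    ring
  rw [h1, h2]
  ring

lemma vand_key {N : ℕ} (z : Fin N → ℂ) (i : Fin N) (c : ℂ) :
    (∏ p, ∏ q ∈ Ioi p, (Function.update z i (z i + c) p - Function.update z i (z i + c) q)) *
        ∏ j ∈ univ.erase i, (z i - z j)
      = (∏ p, ∏ q ∈ Ioi p, (z p - z q)) * ∏ j ∈ univ.erase i, (c + z i - z j) := by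
  have h0 := T_split z i (z i)
  rw [Function.update_eq_self] at h0
  rw [T_split z i (z i + c), h0, erase_split i (fun j => z i - z j),
    erase_split i (fun j => c + z i - z j)]
  set R := ∏ p ∈ univ.erase i, ∏ q ∈ (Ioi p).erase i, (z p - z q)
  set a1 := ∏ q ∈ Ioi i, (z i + c - z q) with ha1
  set b1 := ∏ p ∈ Iio i, (z p - (z i + c)) with hb1
  set a0 := ∏ q ∈ Ioi i, (z i - z q) with ha0
  set b0 := ∏ p ∈ Iio i, (z p - z i) with hb0
  set pio := ∏ j ∈ Iio i, (z i - z j) with hpio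
  set qio := ∏ j ∈ Iio i, (c + z i - z j) with hqio
  have e2 : ∏ j ∈ Ioi i, (c + z i - z j) = a1 := by
    rw [ha1]; exact Finset.prod_congr rfl fun j _ => by ring
  have e1 : b1 * pio = b0 * qio := by
    rw [hb1, hpio, hb0, hqio, ← Finset.prod_mul_distrib, ← Finset.prod_mul_distrib]
    exact Finset.prod_congr rfl fun p _ => by ring
  rw [e2]
  linear_combination a1 * a0 * R * e1


/-- The multivariate Bessel function
`B_a(z) = det[exp(z_i a_j)] / ∏_{i<j} (z_i − z_j)`. -/
noncomputable def MVBessel (N : ℕ) (a : Fin N → ℝ) (z : Fin N → ℂ) : ℂ :=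
  (Matrix.of fun i j : Fin N => Complex.exp (z i * (a j : ℂ))).det /
    ∏ i : Fin N, ∏ j ∈ Finset.Ioi i, (z i - z j)

theorem stmt2 (N : ℕ) (hN : 1 ≤ N) (a : Fin N → ℝ) (c : ℂ) (z : Fin N → ℂ)
    (hz : Function.Injective z)
    (hzc : ∀ i j : Fin N, i ≠ j → z i + c ≠ z j) :
    ∑ i : Fin N,
        (∏ j ∈ Finset.univ.erase i, (c + z i - z j) / (z i - z j)) *
          MVBessel N a (Function.update z i (z i + c))
      = (∑ i : Fin N, Complex.exp (c * (a i : ℂ))) * MVBessel N a z := by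
  set A : Matrix (Fin N) (Fin N) ℂ := Matrix.of fun i j : Fin N => Complex.exp (z i * (a j : ℂ))
    with hA
  have hVz : (∏ p : Fin N, ∏ q ∈ Ioi p, (z p - z q)) ≠ 0 := by
    rw [Finset.prod_ne_zero_iff]
    intro p _
    rw [Finset.prod_ne_zero_iff]
    intro q hq
    exact sub_ne_zero_of_ne (fun h => (ne_of_gt (Finset.mem_Ioi.mp hq)) (hz h).symm)
  have hVu : ∀ i : Fin N,
      (∏ p : Fin N, ∏ q ∈ Ioi p, (Function.update z i (z i + c) p -
        Function.update z i (z i + c) q)) ≠ 0 := by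
    intro i
    rw [Finset.prod_ne_zero_iff]
    intro p _
    rw [Finset.prod_ne_zero_iff]
    intro q hq
    have hpq : p ≠ q := ne_of_lt (Finset.mem_Ioi.mp hq)
    apply sub_ne_zero_of_ne
    by_cases hp : p = i
    · subst hp
      rw [Function.update_self, Function.update_of_ne (Ne.symm hpq)]
      exact hzc p q hpq
    · rw [Function.update_of_ne hp]
      by_cases hq2 : q = i
      · subst hq2
        rw [Function.update_self]
        intro h
        exact hzc q p hpq.symm h.symm
      · rw [Function.update_of_ne hq2]
        exact fun h => hpq (hz h)
  have hP : ∀ i : Fin N, (∏ j ∈ univ.erase i, (z i - z j)) ≠ 0 := by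
    intro i
    rw [Finset.prod_ne_zero_iff]
    intro j hj
    exact sub_ne_zero_of_ne fun h => (Finset.ne_of_mem_erase hj) (hz h).symm
  have hQ : ∀ i : Fin N, (∏ j ∈ univ.erase i, (c + z i - z j)) ≠ 0 := by
    intro i
    rw [Finset.prod_ne_zero_iff]
    intro j hj
    apply sub_ne_zero_of_ne
    rw [add_comm]
    exact hzc i j (Ne.symm (Finset.ne_of_mem_erase hj))
  have hE : ∀ i : Fin N,
      (Matrix.of fun k j : Fin N =>
        Complex.exp (Function.update z i (z i + c) k * (a j : ℂ)))
      = A.updateRow i fun j => A i j * Complex.exp (c * (a j : ℂ)) := by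
    intro i
    ext k j
    by_cases hk : k = i
    · subst hk
      rw [Matrix.of_apply, Matrix.updateRow_self, Function.update_self, hA, Matrix.of_apply,
        ← Complex.exp_add]
      ring_nf
    · rw [Matrix.of_apply, Matrix.updateRow_ne hk, Function.update_of_ne hk, hA, Matrix.of_apply]
  have hterm : ∀ i : Fin N,
      (∏ j ∈ Finset.univ.erase i, (c + z i - z j) / (z i - z j)) *
          MVBessel N a (Function.update z i (z i + c))
        = (A.updateRow i fun j => A i j * Complex.exp (c * (a j : ℂ))).det /
            ∏ p : Fin N, ∏ q ∈ Ioi p, (z p - z q) := by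
    intro i
    rw [MVBessel, hE i, Finset.prod_div_distrib, div_mul_div_comm,
      div_eq_div_iff (mul_ne_zero (hP i) (hVu i)) hVz]
    linear_combination
      (-(A.updateRow i fun j => A i j * Complex.exp (c * (a j : ℂ))).det) * vand_key z i c
  rw [Finset.sum_congr rfl fun i _ => hterm i, ← Finset.sum_div, sum_det_updateRow,
    MVBessel, mul_div_assoc]
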